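/- Let H be a finite abelian group with |H| ≥ 2, let C be a Hamiltonian cycle on H, and let m ≥ 2 be an integer. Then there exists a Hamiltonian cycle C′ on the group H × (ℤ/mℤ) such that |D(C′)| ≤ |D(C)| + 1. -/

import Mathlib

/-- A Hamiltonian cycle on a finite type `G` is a permutation of `G` which is a single
cycle whose support is all of `G`. -/
def IsHamCycle {G : Type*} [Fintype G] [DecidableEq G] (σ : Equiv.Perm G) : Prop :=
  σ.IsCycle ∧ σ.support = Finset.univ

/-- The set `D(C)` of differences of consecutive elements along the Hamiltonian cycle
given by the permutation `σ`. -/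
def cycleDiffs {G : Type*} [AddCommGroup G] [Fintype G] [DecidableEq G]
    (σ : Equiv.Perm G) : Finset G :=
  Finset.image (fun g => σ g - g) Finset.univ

/-- The set `S(C)` of sums of consecutive elements along the Hamiltonian cycle
given by the permutation `σ`. -/
def cycleSums {G : Type*} [AddCommGroup G] [Fintype G] [DecidableEq G]
    (σ : Equiv.Perm G) : Finset G :=
  Finset.image (fun g => g + σ g) Finset.univ

/-- The rank of an additive abelian group: the minimal cardinality of a generating set. -/
noncomputable def addRank (G : Type*) [AddCommGroup G] : ℕ :=
  sInf {n : ℕ | ∃ S : Finset G, S.card = n ∧ AddSubgroup.closure (S : Set G) = ⊤}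

/-- The addition Cayley graph `Cay⁺(G,S)`: distinct vertices `g, h` are adjacent
iff `g + h ∈ S`. -/
def addCayley (G : Type*) [AddCommGroup G] (S : Set G) : SimpleGraph G where
  Adj g h := g ≠ h ∧ g + h ∈ S
  symm := by
    constructor
    intro g h hgh
    exact ⟨hgh.1.symm, by rw [add_comm]; exact hgh.2⟩
  loopless := by
    constructor
    intro g hg
    exact hg.1 rfl

/-- The subgroup `2G = {g + g : g ∈ G}` of `G`. -/
def twoSubgroup (G : Type*) [AddCommGroup G] : AddSubgroup G :=
  (AddMonoidHom.id G + AddMonoidHom.id G).range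



section Snake

variable {H : Type*} [AddCommGroup H] (σ : Equiv.Perm H) (m : ℕ) [NeZero m]

/-- The "snake" Hamiltonian cycle on `H × ZMod m`. -/
def snake : Equiv.Perm (H × ZMod m) where
  toFun p := (if p.2 + 1 = 0 then σ p.1 else p.1, p.2 + 1)
  invFun p := (if p.2 = 0 then σ.symm p.1 else p.1, p.2 - 1)
  left_inv p := by
    obtain ⟨h, j⟩ := p
    by_cases hj : j + 1 = 0
    · simp [hj, eq_neg_of_add_eq_zero_left hj]
    · simp [hj]
  right_inv p := by
    obtain ⟨h, j⟩ := p
    by_cases hj : j = 0 <;> simp [hj, sub_add_cancel]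

lemma snake_apply (p : H × ZMod m) :
    snake σ m p = (if p.2 + 1 = 0 then σ p.1 else p.1, p.2 + 1) := rfl

lemma snake_pow (h : H) (k : ℕ) :
    ((snake σ m) ^ k) (h, 0) = ((σ ^ (k / m)) h, (k : ZMod m)) := by
  induction k with
  | zero => simp
  | succ k ih =>
    rw [pow_succ', Equiv.Perm.mul_apply, ih, snake_apply]
    have hcast : ((k : ZMod m) + 1 = 0) ↔ (m ∣ k + 1) := by
      rw [show ((k : ZMod m) + 1) = ((k + 1 : ℕ) : ZMod m) by push_cast; ring,
        ZMod.natCast_eq_zero_iff]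
    by_cases hd : m ∣ k + 1
    · have h1 : (k + 1) / m = k / m + 1 := by
        rw [Nat.succ_div, if_pos hd]
      simp [hcast.mpr hd, h1, pow_succ', Equiv.Perm.mul_apply]
      try omega
    · have h1 : (k + 1) / m = k / m := by
        rw [Nat.succ_div, if_neg hd, Nat.add_zero]
      simp [hcast, hd, h1]

end Snake

theorem stmt1' (H : Type*) [AddCommGroup H] [Fintype H] [DecidableEq H]
    (hH : 2 ≤ Fintype.card H) (σ : Equiv.Perm H)
    (hσ : σ.IsCycle ∧ σ.support = Finset.univ)
    (m : ℕ) [NeZero m] (hm : 2 ≤ m) :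
    ∃ σ' : Equiv.Perm (H × ZMod m), (σ'.IsCycle ∧ σ'.support = Finset.univ) ∧
      (Finset.image (fun g => σ' g - g) Finset.univ).card ≤
        (Finset.image (fun g => σ g - g) (Finset.univ : Finset H)).card + 1 := by
  haveI : Fact (1 < m) := ⟨hm⟩
  have hone : (1 : ZMod m) ≠ 0 := one_ne_zero
  obtain ⟨h₀⟩ : Nonempty H := Fintype.card_pos_iff.mp (by omega)
  set τ := snake σ m with hτ
  have hfix : ∀ p : H × ZMod m, τ p ≠ p := by
    intro p hp
    apply hone
    have h2 := congrArg Prod.snd hp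
    simp only [hτ, snake_apply] at h2
    have : p.2 + 1 = p.2 + 0 := by rw [add_zero]; exact h2
    exact add_left_cancel this
  have hsupp : ∀ y : H × ZMod m, ∃ k : ℕ, (τ ^ k) (h₀, 0) = y := by
    rintro ⟨h', j⟩
    have hs : ∀ x : H, σ x ≠ x := fun x =>
      Equiv.Perm.mem_support.mp (hσ.2 ▸ Finset.mem_univ x)
    obtain ⟨q, hq⟩ := hσ.1.exists_pow_eq (hs h₀) (hs h')
    refine ⟨q * m + j.val, ?_⟩
    rw [hτ, snake_pow]
    have hdiv : (q * m + j.val) / m = q := by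
      rw [mul_comm, Nat.mul_add_div (Nat.pos_of_ne_zero (NeZero.ne m)),
        Nat.div_eq_of_lt (ZMod.val_lt j), Nat.add_zero]
    have hcast : ((q * m + j.val : ℕ) : ZMod m) = j := by
      push_cast
      simp [ZMod.natCast_self, ZMod.natCast_zmod_val]
    rw [hdiv, hcast, hq]
  refine ⟨τ, ⟨⟨(h₀, 0), hfix _, fun y _ => ?_⟩, ?_⟩, ?_⟩
  · obtain ⟨k, hk⟩ := hsupp y
    exact ⟨(k : ℤ), by rw [zpow_natCast]; exact hk⟩
  · exact Finset.eq_univ_iff_forall.mpr fun p => Equiv.Perm.mem_support.mpr (hfix p)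
  · have hsub : Finset.image (fun g => τ g - g) Finset.univ ⊆
        insert ((0 : H), (1 : ZMod m))
          ((Finset.image (fun g => σ g - g) Finset.univ).image (fun d => (d, (1 : ZMod m)))) := by
      intro x hx
      simp only [Finset.mem_image, Finset.mem_univ, true_and] at hx
      obtain ⟨⟨h, j⟩, rfl⟩ := hx
      by_cases hj : j + 1 = 0
      · refine Finset.mem_insert_of_mem (Finset.mem_image.mpr ⟨σ h - h,
          Finset.mem_image.mpr ⟨h, Finset.mem_univ h, rfl⟩, ?_⟩)
        have hj' : j = -1 := eq_neg_of_add_eq_zero_left hj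
        subst hj'
        simp [hτ, snake_apply, Prod.mk_sub_mk]
      · refine Finset.mem_insert.mpr (Or.inl ?_)
        simp [hτ, snake_apply, hj, Prod.mk_sub_mk]
    calc (Finset.image (fun g => τ g - g) Finset.univ).card
        ≤ _ := Finset.card_le_card hsub
      _ ≤ ((Finset.image (fun g => σ g - g) Finset.univ).image
            (fun d => (d, (1 : ZMod m)))).card + 1 := Finset.card_insert_le _ _
      _ ≤ (Finset.image (fun g => σ g - g) (Finset.univ : Finset H)).card + 1 := by
          exact Nat.add_le_add_right (Finset.card_image_le) 1


theorem stmt1 (H : Type*) [AddCommGroup H] [Fintype H] [DecidableEq H]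
    (hH : 2 ≤ Fintype.card H) (σ : Equiv.Perm H) (hσ : IsHamCycle σ)
    (m : ℕ) [NeZero m] (hm : 2 ≤ m) :
    ∃ σ' : Equiv.Perm (H × ZMod m), IsHamCycle σ' ∧
      (cycleDiffs σ').card ≤ (cycleDiffs σ).card + 1 := by
  exact stmt1' H hH σ hσ m hm
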